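/- Assume S_F ≠ ∅ and that the closure of A_F has nonempty interior in M. Then for every point z = (ϑ, x) ∈ Σ_k × M such that the forward orbit {σ^n(ϑ) : n ≥ 0} is dense in Σ_k, the ω-limit set ω_F(z) equals the closure of graph ρ. -/

import Mathlib

open Set Function Filter Topology

noncomputable section

/-- The shift map on two-sided sequences. -/
def shiftMap {k : ℕ} (θ : ℤ → Fin k) : ℤ → Fin k := fun i => θ (i + 1)

/-- The step skew product `F(θ, x) = (σ θ, f_{θ₀} x)`. -/
def skewProd {k : ℕ} {M : Type*} (f : Fin k → M → M) :
    (ℤ → Fin k) × M → (ℤ → Fin k) × M :=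
  fun p => (shiftMap p.1, f (p.1 0) p.2)

/-- Backward composition `f_{θ₋₁} ∘ ⋯ ∘ f_{θ₋ₙ}`. -/
def bcomp {k : ℕ} {M : Type*} (f : Fin k → M → M) (θ : ℤ → Fin k) : ℕ → M → M
  | 0 => id
  | n + 1 => bcomp f θ n ∘ f (θ (-((n : ℤ) + 1)))

/-- The spine `I_θ = ⋂_{n ≥ 1} f_{θ₋₁} ∘ ⋯ ∘ f_{θ₋ₙ}(M)`. -/
def spine {k : ℕ} {M : Type*} (f : Fin k → M → M) (θ : ℤ → Fin k) : Set M :=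
  ⋂ n : ℕ, bcomp f θ (n + 1) '' Set.univ

/-- The set of weakly hyperbolic sequences: those `θ` whose spine is a singleton. -/
def weakHyp {k : ℕ} {M : Type*} (f : Fin k → M → M) : Set (ℤ → Fin k) :=
  {θ | ∃ x : M, spine f θ = {x}}

/-- The ω-limit set of a point `z` under iteration of `F`: limits of subsequences
`F^{n_j}(z)` with `n_j → ∞`. -/
def omegaLim {α : Type*} [TopologicalSpace α] (F : α → α) (z : α) : Set α :=
  {w | ∃ φ : ℕ → ℕ, StrictMono φ ∧ Tendsto (fun j => F^[φ j] z) atTop (𝓝 w)}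


/-- forward fiber composition -/
def fwd {k : ℕ} {M : Type*} (f : Fin k → M → M) (θ : ℤ → Fin k) : ℕ → M → M
  | 0 => id
  | n + 1 => f (θ (n : ℤ)) ∘ fwd f θ n

section Lemmas

set_option linter.unusedSectionVars false

variable {k : ℕ} {M : Type*} [MetricSpace M] [CompactSpace M] [Nonempty M]
  {f : Fin k → M → M}

lemma shift_iter (θ : ℤ → Fin k) (n : ℕ) (i : ℤ) : (shiftMap^[n] θ) i = θ (i + n) := by
  induction n generalizing θ i with
  | zero => simp
  | succ n ih =>
    rw [Function.iterate_succ_apply, ih]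
    show θ (i + n + 1) = θ (i + (n + 1 : ℕ))
    congr 1
    push_cast; ring

lemma bcomp_zero (θ : ℤ → Fin k) : bcomp f θ 0 = id := rfl

lemma bcomp_succ (θ : ℤ → Fin k) (n : ℕ) :
    bcomp f θ (n + 1) = bcomp f θ n ∘ f (θ (-((n : ℤ) + 1))) := rfl

lemma bcomp_congr {θ θ' : ℤ → Fin k} (n : ℕ)
    (h : ∀ j : ℕ, 1 ≤ j → j ≤ n → θ (-(j : ℤ)) = θ' (-(j : ℤ))) :
    bcomp f θ n = bcomp f θ' n := by
  induction n with
  | zero => rfl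
  | succ n ih =>
    rw [bcomp_succ, bcomp_succ, ih (fun j h1 h2 => h j h1 (h2.trans n.le_succ))]
    have h2 : θ (-((n : ℤ) + 1)) = θ' (-((n : ℤ) + 1)) := by
      have := h (n + 1) (by omega) le_rfl
      have e : -((n + 1 : ℕ) : ℤ) = -((n : ℤ) + 1) := by push_cast; ring
      rwa [e] at this
    rw [h2]

lemma bcomp_continuous (hf : ∀ i, Continuous (f i)) (θ : ℤ → Fin k) (n : ℕ) :
    Continuous (bcomp f θ n) := by
  induction n with
  | zero => exact continuous_id
  | succ n ih => exact ih.comp (hf _)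

lemma bcomp_add (θ : ℤ → Fin k) (a b : ℕ) :
    bcomp f θ (a + b) = bcomp f θ a ∘ bcomp f (fun i => θ (i - a)) b := by
  induction b with
  | zero => rfl
  | succ b ih =>
    have e0 : a + (b + 1) = (a + b) + 1 := by ring
    rw [e0, bcomp_succ, ih, bcomp_succ, Function.comp_assoc]
    have e : (-(((a + b : ℕ) : ℤ) + 1)) = -((b : ℤ) + 1) - (a : ℤ) := by push_cast; ring
    rw [e]

lemma bcomp_succ_left (θ : ℤ → Fin k) (n : ℕ) :
    bcomp f θ (n + 1) = f (θ (-1)) ∘ bcomp f (fun i => θ (i - 1)) n := by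
  have := bcomp_add (f := f) θ 1 n
  rw [add_comm 1 n] at this
  rw [this]
  rfl

lemma fwd_add (θ : ℤ → Fin k) (x : M) (a b : ℕ) :
    fwd f θ (a + b) x = bcomp f (shiftMap^[a + b] θ) b (fwd f θ a x) := by
  induction b with
  | zero => rfl
  | succ b ih =>
    have e1 : a + (b + 1) = (a + b) + 1 := by ring
    rw [e1]
    show f (θ ((a + b : ℕ) : ℤ)) (fwd f θ (a + b) x) = _
    rw [bcomp_succ_left]
    have e2 : (fun i => (shiftMap^[a + b + 1] θ) (i - 1)) = shiftMap^[a + b] θ := by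
      funext i
      rw [shift_iter, shift_iter]
      congr 1
      push_cast; ring
    rw [e2, ih]
    show _ = f ((shiftMap^[a+b+1] θ) (-1)) (bcomp f (shiftMap^[a + b] θ) b (fwd f θ a x))
    rw [shift_iter]
    congr 2
    push_cast; ring

lemma iterate_skewProd (θ : ℤ → Fin k) (x : M) (n : ℕ) :
    (skewProd f)^[n] (θ, x) = (shiftMap^[n] θ, fwd f θ n x) := by
  induction n with
  | zero => rfl
  | succ n ih =>
    rw [Function.iterate_succ_apply', ih]
    show (shiftMap (shiftMap^[n] θ), f ((shiftMap^[n] θ) 0) (fwd f θ n x)) = _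
    have h1 : shiftMap (shiftMap^[n] θ) = shiftMap^[n + 1] θ :=
      (Function.iterate_succ_apply' shiftMap n θ).symm
    have h2 : (shiftMap^[n] θ) 0 = θ (n : ℤ) := by rw [shift_iter]; congr 1; ring
    rw [h1, h2]
    rfl
end Lemmas

section Lemmas2
set_option linter.unusedSectionVars false

variable {k : ℕ} {M : Type*} [MetricSpace M] [CompactSpace M] [Nonempty M]
  {f : Fin k → M → M}

lemma K_closed (hf : ∀ i, Continuous (f i)) (θ : ℤ → Fin k) (n : ℕ) :
    IsClosed (bcomp f θ n '' univ) :=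
  (isCompact_univ.image (bcomp_continuous hf θ n)).isClosed

lemma K_nonempty (θ : ℤ → Fin k) (n : ℕ) : (bcomp f θ n '' univ).Nonempty :=
  univ_nonempty.image _

lemma K_succ_subset (θ : ℤ → Fin k) (n : ℕ) :
    bcomp f θ (n + 1) '' univ ⊆ bcomp f θ n '' univ := by
  rw [bcomp_succ, image_comp]
  exact image_mono (subset_univ _)

lemma iInter_image_subset {g : M → M} (hg : Continuous g) {C : ℕ → Set M}
    (hanti : ∀ n, C (n + 1) ⊆ C n) (hne : ∀ n, (C n).Nonempty)
    (hcl : ∀ n, IsClosed (C n)) :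
    (⋂ n, g '' C n) ⊆ g '' ⋂ n, C n := by
  intro y hy
  have hclD : ∀ n, IsClosed (C n ∩ g ⁻¹' {y}) :=
    fun n => (hcl n).inter (isClosed_singleton.preimage hg)
  have hD : ∀ n, (C n ∩ g ⁻¹' {y}).Nonempty := by
    intro n
    obtain ⟨p, hp, hpy⟩ := mem_iInter.mp hy n
    exact ⟨p, hp, by simpa using hpy⟩
  obtain ⟨q, hq⟩ := IsCompact.nonempty_iInter_of_sequence_nonempty_isCompact_isClosed
    (fun n => C n ∩ g ⁻¹' {y}) (fun n => inter_subset_inter_left _ (hanti n)) hD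
    ((hclD 0).isCompact) hclD
  rw [mem_iInter] at hq
  refine ⟨q, mem_iInter.mpr (fun n => (hq n).1), ?_⟩
  have := (hq 0).2
  simpa using this

lemma exists_subset_open {C : ℕ → Set M} (hanti : ∀ n, C (n + 1) ⊆ C n)
    (hcl : ∀ n, IsClosed (C n)) {U : Set M} (hU : IsOpen U)
    (h : (⋂ n, C n) ⊆ U) : ∃ n, C n ⊆ U := by
  by_contra hc
  push_neg at hc
  have hD : ∀ n, (C n ∩ Uᶜ).Nonempty := by
    intro n
    obtain ⟨p, hp, hpU⟩ := not_subset.mp (hc n)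
    exact ⟨p, hp, hpU⟩
  have hclD : ∀ n, IsClosed (C n ∩ Uᶜ) := fun n => (hcl n).inter hU.isClosed_compl
  obtain ⟨q, hq⟩ := IsCompact.nonempty_iInter_of_sequence_nonempty_isCompact_isClosed
    (fun n => C n ∩ Uᶜ) (fun n => inter_subset_inter_left _ (hanti n)) hD
    ((hclD 0).isCompact) hclD
  rw [mem_iInter] at hq
  exact (hq 0).2 (h (mem_iInter.mpr (fun n => (hq n).1)))

lemma spine_shrink {W : ℤ → Fin k} {p : M} (hf : ∀ i, Continuous (f i))
    (hW : spine f W = {p}) {U : Set M} (hU : IsOpen U) (hpU : p ∈ U) :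
    ∃ n : ℕ, bcomp f W (n + 1) '' univ ⊆ U := by
  have h : (⋂ n : ℕ, bcomp f W (n + 1) '' univ) ⊆ U := by
    rw [← spine, hW]; simpa using hpU
  exact exists_subset_open (fun n => K_succ_subset W (n + 1))
    (fun n => K_closed hf W (n + 1)) hU h

lemma mem_K_of_spine {W : ℤ → Fin k} {p : M} (hW : spine f W = {p}) (n : ℕ) :
    p ∈ bcomp f W (n + 1) '' univ := by
  have : p ∈ spine f W := by rw [hW]; rfl
  exact mem_iInter.mp this n

/-- extension: agree with `η` on `[-m, ∞)`, contracting past of `W` below. -/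
lemma extend_weakHyp (hf : ∀ i, Continuous (f i)) (η : ℤ → Fin k) (m : ℕ)
    {W : ℤ → Fin k} {p : M} (hW : spine f W = {p}) :
    ∃ ϑ : ℤ → Fin k, (∀ i : ℤ, -(m : ℤ) ≤ i → ϑ i = η i) ∧
      spine f ϑ = {bcomp f η m p} := by
  classical
  set ϑ : ℤ → Fin k := fun i => if -(m : ℤ) ≤ i then η i else W (i + m) with hϑ
  have hagree : ∀ i : ℤ, -(m : ℤ) ≤ i → ϑ i = η i := fun i hi => if_pos hi
  have hbm : ∀ n : ℕ, n ≤ m → bcomp f ϑ n = bcomp f η n := by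
    intro n hn
    apply bcomp_congr
    intro j h1 h2
    exact hagree _ (by omega)
  have hsplit : ∀ s : ℕ, bcomp f ϑ (m + s) = bcomp f η m ∘ bcomp f W s := by
    intro s
    rw [bcomp_add, hbm m le_rfl]
    have e : bcomp f (fun i => ϑ (i - (m : ℤ))) s = bcomp f W s := by
      apply bcomp_congr
      intro j h1 h2
      show ϑ (-(j : ℤ) - m) = W (-(j : ℤ))
      rw [hϑ]
      simp only
      rw [if_neg (by omega)]
      congr 1
      ring
    rw [e]
  refine ⟨ϑ, hagree, ?_⟩
  apply Subset.antisymm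
  · have h1 : spine f ϑ ⊆ ⋂ s : ℕ, (bcomp f η m) '' (bcomp f W (s + 1) '' univ) := by
      apply subset_iInter
      intro s
      have h0 : spine f ϑ ⊆ bcomp f ϑ ((m + s) + 1) '' univ := iInter_subset _ (m + s)
      rw [show (m + s) + 1 = m + (s + 1) by ring, hsplit (s + 1), image_comp] at h0
      exact h0
    have h2 := iInter_image_subset (bcomp_continuous hf η m)
      (C := fun s => bcomp f W (s + 1) '' univ) (fun s => K_succ_subset W (s + 1))
      (fun s => K_nonempty W (s + 1)) (fun s => K_closed hf W (s + 1))
    refine h1.trans (h2.trans ?_)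
    rw [← spine, hW, image_singleton]
  · rw [singleton_subset_iff]
    apply mem_iInter.mpr
    intro n
    rcases le_or_gt (n + 1) m with hc | hc
    · have e1 : bcomp f ϑ (n + 1) = bcomp f η (n + 1) := hbm (n + 1) hc
      have e2 : bcomp f η m p = bcomp f η (n + 1)
          (bcomp f (fun i => η (i - ((n + 1 : ℕ) : ℤ))) (m - (n + 1)) p) := by
        have h3 := bcomp_add (f := f) η (n + 1) (m - (n + 1))
        rw [show (n + 1) + (m - (n + 1)) = m from by omega] at h3
        rw [h3]
        rfl
      rw [e1]
      exact ⟨_, mem_univ _, e2.symm⟩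
    · have e1 : n + 1 = m + (n + 1 - m) := by omega
      rw [e1, hsplit]
      have e2 : n + 1 - m = (n - m) + 1 := by omega
      rw [e2]
      obtain ⟨q, _, hq⟩ := mem_K_of_spine hW (n - m)
      exact ⟨q, mem_univ _, by rw [comp_apply, hq]⟩

end Lemmas2

section Lemmas3
set_option linter.unusedSectionVars false

variable {k : ℕ} {M : Type*} [MetricSpace M] [CompactSpace M] [Nonempty M]
  {f : Fin k → M → M}

lemma target_inv (hf : ∀ i, Continuous (f i)) {ρ : (ℤ → Fin k) → M}
    (hρ : ∀ θ ∈ weakHyp f, spine f θ = {ρ θ}) (i : Fin k) :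
    ∀ a ∈ ρ '' weakHyp f, f i a ∈ ρ '' weakHyp f := by
  rintro a ⟨W, hW, rfl⟩
  obtain ⟨ϑ, hag, hsp⟩ := extend_weakHyp hf (fun _ => i) 1 (hρ W hW)
  have hb : bcomp f (fun _ : ℤ => i) 1 (ρ W) = f i (ρ W) := rfl
  rw [hb] at hsp
  have hmem : ϑ ∈ weakHyp f := ⟨_, hsp⟩
  refine ⟨ϑ, hmem, ?_⟩
  have h2 := hρ ϑ hmem
  rw [h2] at hsp
  exact Set.singleton_eq_singleton_iff.mp hsp

lemma closure_target_inv (hf : ∀ i, Continuous (f i)) {ρ : (ℤ → Fin k) → M}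
    (hρ : ∀ θ ∈ weakHyp f, spine f θ = {ρ θ}) (i : Fin k) :
    f i '' closure (ρ '' weakHyp f) ⊆ closure (ρ '' weakHyp f) := by
  refine (image_closure_subset_closure_image (hf i)).trans (closure_mono ?_)
  rintro a ⟨b, hb, rfl⟩
  exact target_inv hf hρ i b hb

lemma bcomp_target (hf : ∀ i, Continuous (f i)) {ρ : (ℤ → Fin k) → M}
    (hρ : ∀ θ ∈ weakHyp f, spine f θ = {ρ θ}) (ξ : ℤ → Fin k) (n : ℕ) :
    bcomp f ξ n '' closure (ρ '' weakHyp f) ⊆ closure (ρ '' weakHyp f) := by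
  induction n with
  | zero => simp [bcomp_zero]
  | succ n ih =>
    rw [bcomp_succ, image_comp]
    exact (image_mono (closure_target_inv hf hρ _)).trans ih

lemma dense_hits {θ : ℤ → Fin k}
    (hdense : Dense (Set.range fun n : ℕ => shiftMap^[n] θ))
    (ξ : ℤ → Fin k) (m N : ℕ) :
    ∃ n : ℕ, N ≤ n ∧ ∀ i : ℤ, -(m : ℤ) ≤ i → i ≤ (m : ℤ) → (shiftMap^[n] θ) i = ξ i := by
  classical
  set P : ℕ := max N (2 * m + 1) with hP
  have hP1 : N ≤ P := le_max_left _ _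
  have hP2 : 2 * m + 1 ≤ P := le_max_right _ _
  set U : Set (ℤ → Fin k) :=
    ⋂ i ∈ Finset.Icc (-(m : ℤ)) (m : ℤ),
      ((fun χ : ℤ → Fin k => χ i) ⁻¹' {ξ i} ∩
        (fun χ : ℤ → Fin k => χ (i + P)) ⁻¹' {ξ i}) with hU
  have hUopen : IsOpen U := by
    apply isOpen_biInter_finset
    intro i _
    exact ((isOpen_discrete _).preimage (continuous_apply i)).inter
      ((isOpen_discrete _).preimage (continuous_apply _))
  have hUne : U.Nonempty := by
    refine ⟨fun j => if -(m : ℤ) ≤ j ∧ j ≤ (m : ℤ) then ξ j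
      else if (P : ℤ) - m ≤ j ∧ j ≤ (P : ℤ) + m then ξ (j - P) else θ j, ?_⟩
    simp only [hU, mem_iInter, Finset.mem_Icc, mem_inter_iff, mem_preimage, mem_singleton_iff]
    intro i hi
    constructor
    · rw [if_pos ⟨hi.1, hi.2⟩]
    · rw [if_neg (by push_cast; omega), if_pos ⟨by push_cast; omega, by push_cast; omega⟩]
      congr 1
      ring
  obtain ⟨χ, ⟨n₀, hn₀⟩, hmem⟩ := hdense.exists_mem_open hUopen hUne
  refine ⟨n₀ + P, by omega, ?_⟩
  intro i hi1 hi2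
  rw [hU] at hmem
  simp only [mem_iInter, Finset.mem_Icc, mem_inter_iff, mem_preimage, mem_singleton_iff] at hmem
  have h2 := (hmem i ⟨hi1, hi2⟩).2
  rw [← hn₀] at h2
  have h3 : (shiftMap^[n₀] θ) (i + P) = ξ i := h2
  rw [shift_iter] at h3 ⊢
  rw [← h3]
  congr 1
  push_cast
  ring

lemma basic_nbhd {O : Set ((ℤ → Fin k) × M)} {p : (ℤ → Fin k) × M}
    (hO : IsOpen O) (hp : p ∈ O) :
    ∃ (m : ℕ) (ε : ℝ), 0 < ε ∧ ∀ q : (ℤ → Fin k) × M,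
      (∀ i : ℤ, -(m : ℤ) ≤ i → i ≤ (m : ℤ) → q.1 i = p.1 i) → dist q.2 p.2 < ε → q ∈ O := by
  obtain ⟨u, v, hu, hv, hpu, hpv, huv⟩ := isOpen_prod_iff.mp hO p.1 p.2 (by simpa using hp)
  obtain ⟨ε, hε, hball⟩ := Metric.isOpen_iff.mp hv p.2 hpv
  have hu' : u ∈ 𝓝 p.1 := hu.mem_nhds hpu
  rw [nhds_pi, Filter.mem_pi] at hu'
  obtain ⟨I, hIfin, t, ht, hIt⟩ := hu'
  obtain ⟨a, ha⟩ := hIfin.bddAbove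
  obtain ⟨b, hb⟩ := hIfin.bddBelow
  have hc : max a (-b) ≤ ((max a (-b)).toNat : ℤ) := Int.self_le_toNat _
  refine ⟨(max a (-b)).toNat, ε, hε, ?_⟩
  intro q hq1 hq2
  have hqmem : q ∈ u ×ˢ v := by
    constructor
    · apply hIt
      intro i hi
      have hia : i ≤ a := ha hi
      have hib : b ≤ i := hb hi
      have h1 : q.1 i = p.1 i := by
        apply hq1 i (by omega) (by omega)
      rw [h1]
      have h2 := ht i
      rw [nhds_discrete] at h2
      exact h2
    · exact hball hq2
  exact huv hqmem

lemma mem_omegaLim_of_frequently {α : Type*} [TopologicalSpace α]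
    [FirstCountableTopology α] (F : α → α) (z w : α)
    (h : ∀ N : ℕ, ∀ U ∈ 𝓝 w, ∃ n, N ≤ n ∧ F^[n] z ∈ U) :
    w ∈ omegaLim F z := by
  obtain ⟨u, hu⟩ := (𝓝 w).exists_antitone_basis
  have H : ∀ N j : ℕ, ∃ n, N ≤ n ∧ F^[n] z ∈ u j :=
    fun N j => h N (u j) (hu.1.mem_of_mem trivial)
  let φ : ℕ → ℕ := fun j => Nat.rec (Classical.choose (H 0 0))
    (fun j prev => Classical.choose (H (prev + 1) (j + 1))) j
  have hφ0 : 0 ≤ φ 0 ∧ F^[φ 0] z ∈ u 0 := Classical.choose_spec (H 0 0)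
  have hφs : ∀ j, φ j + 1 ≤ φ (j + 1) ∧ F^[φ (j + 1)] z ∈ u (j + 1) :=
    fun j => Classical.choose_spec (H (φ j + 1) (j + 1))
  refine ⟨φ, strictMono_nat_of_lt_succ (fun j => lt_of_lt_of_le (Nat.lt_succ_self _) (hφs j).1), ?_⟩
  apply hu.tendsto
  intro i
  cases i with
  | zero => exact hφ0.2
  | succ j => exact (hφs j).2

end Lemmas3

section Lemmas4
set_option linter.unusedSectionVars false

variable {k : ℕ} {M : Type*} [MetricSpace M] [CompactSpace M] [Nonempty M]
  {f : Fin k → M → M}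

lemma graph_point_hit (hf : ∀ i, Continuous (f i)) {ρ : (ℤ → Fin k) → M}
    (hρ : ∀ θ ∈ weakHyp f, spine f θ = {ρ θ}) {θ : ℤ → Fin k} (x : M)
    (hdense : Dense (Set.range fun n : ℕ => shiftMap^[n] θ))
    {ϑ : ℤ → Fin k} (hϑ : ϑ ∈ weakHyp f)
    {O : Set ((ℤ → Fin k) × M)} (hO : IsOpen O) (hmem : (ϑ, ρ ϑ) ∈ O) (N : ℕ) :
    ∃ n, N ≤ n ∧ (skewProd f)^[n] (θ, x) ∈ O := by
  obtain ⟨m, ε, hε, hbasic⟩ := basic_nbhd hO hmem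
  obtain ⟨n₀, hK⟩ := spine_shrink hf (hρ ϑ hϑ) Metric.isOpen_ball (Metric.mem_ball_self hε)
  set L : ℕ := max m (n₀ + 1) with hL
  have hmL : m ≤ L := le_max_left _ _
  have hnL0 : n₀ + 1 ≤ L := le_max_right _ _
  obtain ⟨n, hn, hmatch⟩ := dense_hits hdense ϑ L (max N L)
  have hnN : N ≤ n := le_trans (le_max_left _ _) hn
  have hnL : L ≤ n := le_trans (le_max_right _ _) hn
  refine ⟨n, hnN, ?_⟩
  rw [iterate_skewProd]
  apply hbasic
  · intro i h1 h2
    exact hmatch i (by push_cast at h1 ⊢; omega) (by push_cast at h2 ⊢; omega)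
  · have hsplit : fwd f θ n x = bcomp f (shiftMap^[n] θ) (n₀ + 1) (fwd f θ (n - (n₀ + 1)) x) := by
      have h0 := fwd_add (f := f) θ x (n - (n₀ + 1)) (n₀ + 1)
      rw [show (n - (n₀ + 1)) + (n₀ + 1) = n from by omega] at h0
      exact h0
    have hcongr : bcomp f (shiftMap^[n] θ) (n₀ + 1) = bcomp f ϑ (n₀ + 1) := by
      apply bcomp_congr
      intro j h1 h2
      exact hmatch (-(j : ℤ)) (by push_cast; omega) (by push_cast; omega)
    have hin : fwd f θ n x ∈ Metric.ball (ρ ϑ) ε :=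
      hK ⟨fwd f θ (n - (n₀ + 1)) x, mem_univ _, by rw [hsplit, hcongr]⟩
    simpa [Metric.mem_ball] using hin

lemma closure_graph_subset_omega (hf : ∀ i, Continuous (f i)) {ρ : (ℤ → Fin k) → M}
    (hρ : ∀ θ ∈ weakHyp f, spine f θ = {ρ θ}) {θ : ℤ → Fin k} (x : M)
    (hdense : Dense (Set.range fun n : ℕ => shiftMap^[n] θ)) :
    closure ((fun ϑ => (ϑ, ρ ϑ)) '' weakHyp f) ⊆ omegaLim (skewProd f) (θ, x) := by
  intro w hw
  apply mem_omegaLim_of_frequently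
  intro N U hU
  obtain ⟨O, hOU, hOopen, hwO⟩ := mem_nhds_iff.mp hU
  obtain ⟨g, hgO, ⟨ϑ, hϑ, rfl⟩⟩ := mem_closure_iff.mp hw O hOopen hwO
  obtain ⟨n, hn, hmem⟩ := graph_point_hit hf hρ x hdense hϑ hOopen hgO N
  exact ⟨n, hn, hOU hmem⟩

lemma absorb (hf : ∀ i, Continuous (f i)) {ρ : (ℤ → Fin k) → M}
    (hρ : ∀ θ ∈ weakHyp f, spine f θ = {ρ θ})
    (hint : (interior (closure (ρ '' weakHyp f))).Nonempty)
    {θ : ℤ → Fin k}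
    (hdense : Dense (Set.range fun n : ℕ => shiftMap^[n] θ)) (x : M) :
    ∃ t0 : ℕ, ∀ t : ℕ, t0 ≤ t → fwd f θ t x ∈ closure (ρ '' weakHyp f) := by
  obtain ⟨b₀, hb₀⟩ := hint
  have hb₀T : b₀ ∈ closure (ρ '' weakHyp f) := interior_subset hb₀
  obtain ⟨a, haint, haA⟩ := mem_closure_iff.mp hb₀T _ isOpen_interior hb₀
  obtain ⟨W, hW, rfl⟩ := haA
  obtain ⟨n₀, hK⟩ := spine_shrink hf (hρ W hW) isOpen_interior haint
  obtain ⟨s, hs, hmatch⟩ := dense_hits hdense W (n₀ + 1) (n₀ + 1)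
  have h1 : fwd f θ s x ∈ closure (ρ '' weakHyp f) := by
    have hsplit : fwd f θ s x = bcomp f (shiftMap^[s] θ) (n₀ + 1) (fwd f θ (s - (n₀ + 1)) x) := by
      have h0 := fwd_add (f := f) θ x (s - (n₀ + 1)) (n₀ + 1)
      rw [show (s - (n₀ + 1)) + (n₀ + 1) = s from by omega] at h0
      exact h0
    have hcongr : bcomp f (shiftMap^[s] θ) (n₀ + 1) = bcomp f W (n₀ + 1) := by
      apply bcomp_congr
      intro j hj1 hj2
      exact hmatch (-(j : ℤ)) (by push_cast; omega) (by push_cast; omega)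
    have hin : fwd f θ s x ∈ interior (closure (ρ '' weakHyp f)) :=
      hK ⟨fwd f θ (s - (n₀ + 1)) x, mem_univ _, by rw [hsplit, hcongr]⟩
    exact interior_subset hin
  refine ⟨s, fun t hst => ?_⟩
  have hsplit2 : fwd f θ t x = bcomp f (shiftMap^[t] θ) (t - s) (fwd f θ s x) := by
    have h0 := fwd_add (f := f) θ x s (t - s)
    rw [show s + (t - s) = t from by omega] at h0
    exact h0
  rw [hsplit2]
  exact bcomp_target hf hρ _ _ ⟨_, h1, rfl⟩

lemma omega_subset_closure_graph (hf : ∀ i, Continuous (f i)) {ρ : (ℤ → Fin k) → M}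
    (hρ : ∀ θ ∈ weakHyp f, spine f θ = {ρ θ})
    (hint : (interior (closure (ρ '' weakHyp f))).Nonempty)
    {θ : ℤ → Fin k} (x : M)
    (hdense : Dense (Set.range fun n : ℕ => shiftMap^[n] θ)) :
    omegaLim (skewProd f) (θ, x) ⊆ closure ((fun ϑ => (ϑ, ρ ϑ)) '' weakHyp f) := by
  rintro ⟨η, y⟩ ⟨φ, hφ, hconv⟩
  obtain ⟨t0, ht0⟩ := absorb hf hρ hint hdense x
  have hconv1 : Tendsto (fun j => shiftMap^[φ j] θ) atTop (𝓝 η) := by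
    have h1 := (continuous_fst.tendsto ((η, y) : (ℤ → Fin k) × M)).comp hconv
    simp only [Function.comp_def, iterate_skewProd] at h1
    exact h1
  have hconv2 : Tendsto (fun j => fwd f θ (φ j) x) atTop (𝓝 y) := by
    have h1 := (continuous_snd.tendsto ((η, y) : (ℤ → Fin k) × M)).comp hconv
    simp only [Function.comp_def, iterate_skewProd] at h1
    exact h1
  rw [mem_closure_iff]
  intro O hO hyO
  obtain ⟨m, ε, hε, hbasic⟩ := basic_nbhd hO hyO
  have hcoord : ∀ i : ℤ, ∀ᶠ j in atTop, (shiftMap^[φ j] θ) i = η i := by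
    intro i
    have h := tendsto_pi_nhds.mp hconv1 i
    have hsing : {η i} ∈ 𝓝 (η i) := by
      rw [nhds_discrete]
      exact mem_pure.mpr rfl
    filter_upwards [h hsing] with j hj using hj
  have hev : ∀ᶠ j in atTop, ∀ i ∈ Set.Icc (-(m : ℤ)) (m : ℤ), (shiftMap^[φ j] θ) i = η i :=
    (eventually_all_finite (Set.finite_Icc _ _)).mpr (fun i _ => hcoord i)
  have hbig : ∀ᶠ j in atTop, m + t0 ≤ φ j :=
    eventually_atTop.mpr ⟨m + t0, fun j hj => le_trans hj hφ.le_apply⟩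
  have hkey : ∀ᶠ j in atTop,
      fwd f θ (φ j) x ∈ bcomp f η m '' closure (ρ '' weakHyp f) := by
    filter_upwards [hev, hbig] with j h1 h2
    have hsplit : fwd f θ (φ j) x
        = bcomp f (shiftMap^[φ j] θ) m (fwd f θ (φ j - m) x) := by
      have h0 := fwd_add (f := f) θ x (φ j - m) m
      rw [show (φ j - m) + m = φ j from by omega] at h0
      exact h0
    have hcongr : bcomp f (shiftMap^[φ j] θ) m = bcomp f η m := by
      apply bcomp_congr
      intro jj hj1 hj2
      exact h1 (-(jj : ℤ)) ⟨by push_cast; omega, by push_cast; omega⟩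
    exact ⟨fwd f θ (φ j - m) x, ht0 _ (by omega), by rw [hsplit, hcongr]⟩
  have hTclosed : IsClosed (bcomp f η m '' closure (ρ '' weakHyp f)) :=
    ((isClosed_closure.isCompact).image (bcomp_continuous hf η m)).isClosed
  have hyT : y ∈ bcomp f η m '' closure (ρ '' weakHyp f) :=
    hTclosed.mem_of_tendsto hconv2 hkey
  have hycl : y ∈ closure (bcomp f η m '' (ρ '' weakHyp f)) := by
    obtain ⟨q, hqT, hqy⟩ := hyT
    rw [← hqy]
    exact image_closure_subset_closure_image (bcomp_continuous hf η m) ⟨q, hqT, rfl⟩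
  obtain ⟨w', hw'ball, hw'mem⟩ :=
    mem_closure_iff.mp hycl (Metric.ball y ε) Metric.isOpen_ball (Metric.mem_ball_self hε)
  obtain ⟨a, ⟨W, hW, rfl⟩, rfl⟩ := hw'mem
  obtain ⟨ϑ, hag, hsp⟩ := extend_weakHyp hf η m (hρ W hW)
  have hϑwh : ϑ ∈ weakHyp f := ⟨_, hsp⟩
  have hρϑ : ρ ϑ = bcomp f η m (ρ W) := by
    have h2 := hρ ϑ hϑwh
    rw [h2] at hsp
    exact Set.singleton_eq_singleton_iff.mp hsp
  refine ⟨(ϑ, ρ ϑ), ?_, ⟨ϑ, hϑwh, rfl⟩⟩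
  apply hbasic
  · intro i hi1 _
    exact hag i hi1
  · rw [hρϑ]
    simpa [Metric.mem_ball] using hw'ball

end Lemmas4


/-- If `S_F ≠ ∅` and the closure of the target set `A_F = ρ(S_F)` has nonempty interior,
then for every point `z = (θ, x)` whose base forward orbit is dense, the ω-limit set of
`z` equals the closure of the graph of the coding map. -/
theorem omegaLimit_eq_closure_graph_of_nonempty_interior
    {k : ℕ} (hk : 1 ≤ k) {M : Type*} [MetricSpace M] [CompactSpace M] [Nonempty M]
    (f : Fin k → M → M) (hf : ∀ i, Continuous (f i))
    (hS : (weakHyp f).Nonempty)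
    (ρ : (ℤ → Fin k) → M) (hρ : ∀ θ ∈ weakHyp f, spine f θ = {ρ θ})
    (hint : (interior (closure (ρ '' weakHyp f))).Nonempty)
    (θ : ℤ → Fin k) (x : M)
    (hdense : Dense (Set.range fun n : ℕ => shiftMap^[n] θ)) :
    omegaLim (skewProd f) (θ, x) = closure ((fun ϑ => (ϑ, ρ ϑ)) '' weakHyp f) :=
  Set.Subset.antisymm
    (omega_subset_closure_graph hf hρ hint x hdense)
    (closure_graph_subset_omega hf hρ x hdense)
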